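/- For each fixed k and each x ∈ [0,1], the sequence of discrete powers Z^{:k:}_n(x_n), evaluated at the lattice point x_n = ⌊nx⌋/n of the n-th subdivision, converges to x^k as n → ∞. -/

import Mathlib

open Filter Finset

/-- Error constants for the discrete power bounds. -/
noncomputable def Ck : ℕ → ℝ
  | 0 => 0
  | (j+1) => ((j : ℝ) + 1) * Ck j + (j : ℝ) * ((j : ℝ) + 1)

lemma Ck_succ (j : ℕ) : Ck (j+1) = ((j : ℝ) + 1) * Ck j + (j : ℝ) * ((j : ℝ) + 1) := by
  rw [Ck]

lemma Ck_nonneg (k : ℕ) : 0 ≤ Ck k := by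
  induction k with
  | zero => simp [Ck]
  | succ j ih =>
    have hj : (0:ℝ) ≤ (j:ℝ) := Nat.cast_nonneg j
    show 0 ≤ ((j : ℝ) + 1) * Ck j + (j : ℝ) * ((j : ℝ) + 1)
    nlinarith

lemma pow_sub_pow_le_aux (a b : ℝ) (ha : 0 ≤ a) (hab : a ≤ b) (hb : b ≤ 1) (k : ℕ) :
    b ^ k - a ^ k ≤ (k : ℝ) * (b - a) := by
  have hgeo := geom_sum₂_mul b a k
  rw [← hgeo]
  have hb0 : 0 ≤ b := le_trans ha hab
  have hsum : ∑ i ∈ range k, b ^ i * a ^ (k - 1 - i) ≤ (k : ℝ) := by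
    calc ∑ i ∈ range k, b ^ i * a ^ (k - 1 - i) ≤ ∑ _i ∈ range k, (1:ℝ) := by
          apply sum_le_sum
          intro i _
          have h1 : b ^ i ≤ 1 := pow_le_one₀ hb0 hb
          have h2 : a ^ (k - 1 - i) ≤ 1 := pow_le_one₀ ha (le_trans hab hb)
          have h3 : 0 ≤ b ^ i := pow_nonneg hb0 _
          nlinarith [pow_nonneg ha (k - 1 - i)]
      _ = (k : ℝ) := by simp
  have hba : 0 ≤ b - a := sub_nonneg.2 hab
  exact mul_le_mul_of_nonneg_right hsum hba

/-- Trapezoid rule error bound for `t ↦ t^k` on `[a,b] ⊆ [0,1]`. -/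
lemma trap_bound (k : ℕ) (a b : ℝ) (ha : 0 ≤ a) (hab : a ≤ b) (hb : b ≤ 1) :
    |((k : ℝ) + 1) * (a ^ k + b ^ k) * (b - a) / 2 - (b ^ (k+1) - a ^ (k+1))|
      ≤ ((k : ℝ) * ((k : ℝ) + 1) / 2) * (b - a) ^ 2 := by
  have hb0 : 0 ≤ b := le_trans ha hab
  have hgeo : b ^ (k+1) - a ^ (k+1)
      = (∑ i ∈ range (k+1), b ^ i * a ^ (k - i)) * (b - a) := by
    rw [← geom_sum₂_mul b a (k+1)]
    congr 1
  have hid : ((k : ℝ) + 1) * (a ^ k + b ^ k) * (b - a) / 2 - (b ^ (k+1) - a ^ (k+1))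
      = (∑ i ∈ range (k+1), ((a ^ k + b ^ k) / 2 - b ^ i * a ^ (k - i))) * (b - a) := by
    rw [hgeo, sum_sub_distrib, sum_const, card_range]
    push_cast
    ring
  rw [hid, abs_mul, abs_of_nonneg (sub_nonneg.2 hab)]
  have hterm : ∀ i ∈ range (k+1),
      |(a ^ k + b ^ k) / 2 - b ^ i * a ^ (k - i)| ≤ (b ^ k - a ^ k) / 2 := by
    intro i hi
    have hik : i ≤ k := Nat.lt_succ_iff.mp (mem_range.mp hi)
    have h1 : a ^ k ≤ b ^ i * a ^ (k - i) := by
      calc a ^ k = a ^ i * a ^ (k - i) := by rw [← pow_add]; congr 1; omega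
        _ ≤ b ^ i * a ^ (k - i) :=
            mul_le_mul_of_nonneg_right (pow_le_pow_left₀ ha hab i) (pow_nonneg ha _)
    have h2 : b ^ i * a ^ (k - i) ≤ b ^ k := by
      calc b ^ i * a ^ (k - i) ≤ b ^ i * b ^ (k - i) :=
            mul_le_mul_of_nonneg_left (pow_le_pow_left₀ ha hab _) (pow_nonneg hb0 _)
        _ = b ^ k := by rw [← pow_add]; congr 1; omega
    rw [abs_le]
    constructor <;> linarith
  have hsum : |∑ i ∈ range (k+1), ((a ^ k + b ^ k) / 2 - b ^ i * a ^ (k - i))|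
      ≤ ((k : ℝ) + 1) * ((b ^ k - a ^ k) / 2) := by
    calc |∑ i ∈ range (k+1), ((a ^ k + b ^ k) / 2 - b ^ i * a ^ (k - i))|
        ≤ ∑ i ∈ range (k+1), |(a ^ k + b ^ k) / 2 - b ^ i * a ^ (k - i)| :=
          Finset.abs_sum_le_sum_abs _ _
      _ ≤ ∑ _i ∈ range (k+1), (b ^ k - a ^ k) / 2 := sum_le_sum hterm
      _ = ((k : ℝ) + 1) * ((b ^ k - a ^ k) / 2) := by
          rw [sum_const, card_range]; push_cast; ring
  have hpow := pow_sub_pow_le_aux a b ha hab hb k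
  have hba : 0 ≤ b - a := sub_nonneg.2 hab
  calc |∑ i ∈ range (k+1), ((a ^ k + b ^ k) / 2 - b ^ i * a ^ (k - i))| * (b - a)
      ≤ (((k : ℝ) + 1) * (((k : ℝ) * (b - a)) / 2)) * (b - a) := by
        apply mul_le_mul_of_nonneg_right _ hba
        refine le_trans hsum ?_
        have hk1 : (0:ℝ) ≤ (k : ℝ) + 1 := by positivity
        apply mul_le_mul_of_nonneg_left _ hk1
        linarith
    _ = ((k : ℝ) * ((k : ℝ) + 1) / 2) * (b - a) ^ 2 := by ring

lemma main_bound (Z : ℕ → ℕ → ℕ → ℝ)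
    (hZ0 : ∀ n, 1 ≤ n → ∀ ℓ, Z n 0 ℓ = 1)
    (hZinit : ∀ n, 1 ≤ n → ∀ j, Z n (j + 1) 0 = 0)
    (hZrec : ∀ n, 1 ≤ n → ∀ j ℓ, Z n (j + 1) (ℓ + 1) =
      Z n (j + 1) ℓ + ((j : ℝ) + 1) * (Z n j ℓ + Z n j (ℓ + 1)) / (2 * n))
    (k n : ℕ) (hn : 1 ≤ n) :
    ∀ ℓ, ℓ ≤ n → |Z n k ℓ - ((ℓ : ℝ) / n) ^ k| ≤ Ck k / n := by
  have hn' : (0:ℝ) < n := by exact_mod_cast hn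
  induction k with
  | zero =>
    intro ℓ _
    simp [hZ0 n hn, Ck]
  | succ k ih =>
    have key : ∀ ℓ, ℓ ≤ n →
        |Z n (k+1) ℓ - ((ℓ : ℝ) / n) ^ (k+1)| ≤ (ℓ : ℝ) * Ck (k+1) / n ^ 2 := by
      intro ℓ
      induction ℓ with
      | zero => intro _; simp [hZinit n hn]
      | succ ℓ ihℓ =>
        intro hℓ1
        have hℓ : ℓ ≤ n := Nat.le_of_succ_le hℓ1
        have ihe := ihℓ hℓ
        set a : ℝ := (ℓ : ℝ) / n with ha_def
        set b : ℝ := ((ℓ : ℝ) + 1) / n with hb_def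
        have ha : 0 ≤ a := by positivity
        have hba : b - a = 1 / n := by rw [ha_def, hb_def]; field_simp; ring
        have hninv : (0:ℝ) < 1 / n := by positivity
        have hab : a ≤ b := by linarith
        have hb1 : b ≤ 1 := by
          rw [hb_def, div_le_one hn']
          have : ((ℓ:ℝ) + 1) ≤ (n:ℝ) := by exact_mod_cast hℓ1
          linarith
        have htrap := trap_bound k a b ha hab hb1
        have hek := ih ℓ hℓ
        have hek1 := ih (ℓ+1) hℓ1
        have hek1' : |Z n k (ℓ+1) - b ^ k| ≤ Ck k / n := by
          rw [hb_def]; push_cast at hek1 ⊢; exact hek1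
        have hrec := hZrec n hn k ℓ
        have hid : Z n (k+1) (ℓ+1) - b ^ (k+1)
            = (Z n (k+1) ℓ - a ^ (k+1))
              + ((k : ℝ) + 1) * ((Z n k ℓ - a ^ k) + (Z n k (ℓ+1) - b ^ k)) / (2 * n)
              + (((k : ℝ) + 1) * (a ^ k + b ^ k) * (b - a) / 2 - (b ^ (k+1) - a ^ (k+1))) := by
          rw [hrec, hba]
          field_simp
          ring
        have hB : |((k : ℝ) + 1) * ((Z n k ℓ - a ^ k) + (Z n k (ℓ+1) - b ^ k)) / (2 * n)|
            ≤ ((k : ℝ) + 1) * Ck k / n ^ 2 := by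
          have habs : |(Z n k ℓ - a ^ k) + (Z n k (ℓ+1) - b ^ k)| ≤ 2 * (Ck k / n) :=
            le_trans (abs_add_le _ _) (by linarith)
          have h2n : (0:ℝ) < 2 * n := by linarith
          calc |((k : ℝ) + 1) * ((Z n k ℓ - a ^ k) + (Z n k (ℓ+1) - b ^ k)) / (2 * n)|
              = ((k : ℝ) + 1) * |(Z n k ℓ - a ^ k) + (Z n k (ℓ+1) - b ^ k)| / (2 * n) := by
                rw [abs_div, abs_mul, abs_of_nonneg (by positivity : (0:ℝ) ≤ (k:ℝ)+1),
                  abs_of_pos h2n]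
            _ ≤ ((k : ℝ) + 1) * (2 * (Ck k / n)) / (2 * n) := by gcongr
            _ = ((k : ℝ) + 1) * Ck k / n ^ 2 := by field_simp
        have htrap' : |((k : ℝ) + 1) * (a ^ k + b ^ k) * (b - a) / 2 - (b ^ (k+1) - a ^ (k+1))|
            ≤ ((k : ℝ) * ((k : ℝ) + 1) / 2) / n ^ 2 := by
          refine le_trans htrap ?_
          rw [hba]
          have : (1 / (n:ℝ)) ^ 2 = 1 / n ^ 2 := by ring
          rw [this]
          rw [mul_one_div]
        have hgoal : |Z n (k+1) (ℓ+1) - b ^ (k+1)|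
            ≤ ((ℓ : ℝ) + 1) * Ck (k+1) / n ^ 2 := by
          rw [hid]
          have t1 := abs_add_le ((Z n (k+1) ℓ - a ^ (k+1))
              + ((k : ℝ) + 1) * ((Z n k ℓ - a ^ k) + (Z n k (ℓ+1) - b ^ k)) / (2 * n))
            (((k : ℝ) + 1) * (a ^ k + b ^ k) * (b - a) / 2 - (b ^ (k+1) - a ^ (k+1)))
          have t2 := abs_add_le (Z n (k+1) ℓ - a ^ (k+1))
            (((k : ℝ) + 1) * ((Z n k ℓ - a ^ k) + (Z n k (ℓ+1) - b ^ k)) / (2 * n))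
          have hsum : (ℓ : ℝ) * Ck (k+1) / n ^ 2 + ((k : ℝ) + 1) * Ck k / n ^ 2
              + ((k : ℝ) * ((k : ℝ) + 1) / 2) / n ^ 2
              ≤ ((ℓ : ℝ) + 1) * Ck (k+1) / n ^ 2 := by
            rw [← add_div, ← add_div, div_le_div_iff₀ (by positivity) (by positivity)]
            have h2 : Ck (k+1) * (n:ℝ)^2
                = ((k:ℝ)+1) * Ck k * (n:ℝ)^2 + (k:ℝ) * ((k:ℝ)+1) * (n:ℝ)^2 := by
              rw [Ck_succ]; ring
            have h3 : (0:ℝ) ≤ (k:ℝ) * ((k:ℝ)+1) * (n:ℝ)^2 := by positivity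
            nlinarith [h2, h3]
          linarith
        rw [hb_def] at hgoal
        push_cast at hgoal ⊢
        exact hgoal
    intro ℓ hℓ
    refine le_trans (key ℓ hℓ) ?_
    have hℓn : (ℓ : ℝ) ≤ (n : ℝ) := by exact_mod_cast hℓ
    have := Ck_nonneg (k+1)
    rw [div_le_div_iff₀ (by positivity) hn']
    nlinarith [mul_le_mul_of_nonneg_right hℓn (mul_nonneg this hn'.le)]

open Filter

/-- For fixed `k` and `x ∈ [0,1]`, the discrete powers evaluated at the
lattice points `⌊nx⌋/n` of the `n`-th subdivision converge to `x^k`. -/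
theorem discrete_power_tendsto (k : ℕ) (x : ℝ) (hx : x ∈ Set.Icc (0 : ℝ) 1)
    (Z : ℕ → ℕ → ℕ → ℝ)
    (hZ0 : ∀ n, 1 ≤ n → ∀ ℓ, Z n 0 ℓ = 1)
    (hZinit : ∀ n, 1 ≤ n → ∀ j, Z n (j + 1) 0 = 0)
    (hZrec : ∀ n, 1 ≤ n → ∀ j ℓ, Z n (j + 1) (ℓ + 1) =
      Z n (j + 1) ℓ + ((j : ℝ) + 1) * (Z n j ℓ + Z n j (ℓ + 1)) / (2 * n)) :
    Tendsto (fun n : ℕ => Z n k ⌊(n : ℝ) * x⌋₊) atTop (nhds (x ^ k)) := by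
  obtain ⟨hx0, hx1⟩ := hx
  have hfloor : Tendsto (fun n : ℕ => (⌊(n : ℝ) * x⌋₊ : ℝ) / n) atTop (nhds x) := by
    have h := (tendsto_nat_floor_mul_div_atTop hx0).comp
      (tendsto_natCast_atTop_atTop (R := ℝ))
    convert h using 2 with n
    rw [Function.comp_apply, mul_comm]
  have hp : Tendsto (fun n : ℕ => ((⌊(n : ℝ) * x⌋₊ : ℝ) / n) ^ k) atTop (nhds (x ^ k)) :=
    hfloor.pow k
  have hdiff : Tendsto (fun n : ℕ =>
      Z n k ⌊(n : ℝ) * x⌋₊ - ((⌊(n : ℝ) * x⌋₊ : ℝ) / n) ^ k) atTop (nhds 0) := by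
    apply squeeze_zero_norm' (a := fun n : ℕ => Ck k / n)
    · filter_upwards [eventually_ge_atTop 1] with n hn
      have hℓn : ⌊(n : ℝ) * x⌋₊ ≤ n := by
        have : (n : ℝ) * x ≤ (n : ℝ) := by nlinarith [Nat.cast_nonneg (α := ℝ) n]
        calc ⌊(n : ℝ) * x⌋₊ ≤ ⌊(n : ℝ)⌋₊ := Nat.floor_mono this
          _ = n := Nat.floor_natCast n
      exact main_bound Z hZ0 hZinit hZrec k n hn _ hℓn
    · exact tendsto_const_div_atTop_nhds_zero_nat (Ck k)
  have := hdiff.add hp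
  rw [zero_add] at this
  convert this using 2 with n
  ring
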